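/- arXiv:2006.06991 — 4 statements merged into one kernel-verified Lean document; each statement's English description precedes it below -/
import Mathlib

section
/- Let ι be a nonempty finite index set, f_c > 0, τ₀ ∈ ℝ, τ : ι → ℝ, A₀ > 0 and A : ι → ℝ with A i > 0. If there exists some i ∈ ι with f_c·(τ i − τ₀) ∉ ℤ, then the zero phase-shift configuration (which minimizes the delay spread) is strictly suboptimal for received power: ‖A₀·exp(−2π·I·f_c·τ₀) + ∑_{i∈ι} A i · exp(−2π·I·f_c·τ i)‖ < A₀ + ∑_{i∈ι} A i. In particular, jointly maximizing the received power and minimizing the delay spread is then impossible. -/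
open Real Finset

/-- if for some element `f_c (τ i − τ₀)` is not an integer, then
the zero phase-shift configuration is strictly suboptimal in received power. -/
theorem zero_phase_strictly_suboptimal
    {ι : Type*} [Fintype ι] [Nonempty ι]
    (f_c : ℝ) (hf : 0 < f_c) (τ₀ : ℝ) (τ : ι → ℝ)
    (A₀ : ℝ) (hA₀ : 0 < A₀) (A : ι → ℝ) (hA : ∀ i, 0 < A i)
    (hnint : ∃ i, ¬ ∃ k : ℤ, f_c * (τ i - τ₀) = (k : ℝ)) :
    ‖(A₀ : ℂ) * Complex.exp (-(2 * π * f_c * τ₀ : ℝ) * Complex.I)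
        + ∑ i, (A i : ℂ) * Complex.exp (-(2 * π * f_c * τ i : ℝ) * Complex.I)‖
      < A₀ + ∑ i, A i := by
  classical
  obtain ⟨j, hj⟩ := hnint
  set z : ι → ℂ := fun i => (A i : ℂ) * Complex.exp (-(2 * π * f_c * τ i : ℝ) * Complex.I)
    with hz
  set z₀ : ℂ := (A₀ : ℂ) * Complex.exp (-(2 * π * f_c * τ₀ : ℝ) * Complex.I) with hz0
  have hnorm : ∀ i, ‖z i‖ = A i := by
    intro i
    simp [hz, Complex.norm_exp, abs_of_pos (hA i)]
  have hnorm0 : ‖z₀‖ = A₀ := by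
    simp [hz0, Complex.norm_exp, abs_of_pos hA₀]
  -- key strict inequality
  have hkey : ‖z₀ + z j‖ < A₀ + A j := by
    have hray : ¬ SameRay ℝ z₀ (z j) := by
      intro hsr
      have hz0ne : z₀ ≠ 0 := by
        intro h; rw [h, norm_zero] at hnorm0; exact hA₀.ne hnorm0
      have hzjne : z j ≠ 0 := by
        intro h; have := hnorm j; rw [h, norm_zero] at this; exact (hA j).ne this
      obtain ⟨r, s, hr, hs, heq⟩ := hsr.exists_pos hz0ne hzjne
      have hnorms : r * A₀ = s * A j := by
        have := congrArg norm heq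
        simpa [norm_smul, hnorm0, hnorm j, abs_of_pos hr, abs_of_pos hs] using this
      -- derive exp equality
      have hexp : Complex.exp (-(2 * π * f_c * τ₀ : ℝ) * Complex.I)
          = Complex.exp (-(2 * π * f_c * τ j : ℝ) * Complex.I) := by
        have h1 : ((r * A₀ : ℝ) : ℂ) * Complex.exp (-(2 * π * f_c * τ₀ : ℝ) * Complex.I)
            = ((s * A j : ℝ) : ℂ) * Complex.exp (-(2 * π * f_c * τ j : ℝ) * Complex.I) := by
          simp only [hz0, hz, Complex.real_smul] at heq
          push_cast at heq ⊢
          linear_combination heq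
        rw [hnorms] at h1
        have hsA : ((s * A j : ℝ) : ℂ) ≠ 0 := by
          exact_mod_cast (mul_pos hs (hA j)).ne'
        exact mul_left_cancel₀ hsA h1
      rw [Complex.exp_eq_exp_iff_exists_int] at hexp
      obtain ⟨n, hn⟩ := hexp
      apply hj
      refine ⟨n, ?_⟩
      have h2 : ((-(2 * π * f_c * τ₀) : ℝ) : ℂ) * Complex.I
          = ((-(2 * π * f_c * τ j) + n * (2 * π) : ℝ) : ℂ) * Complex.I := by
        push_cast
        push_cast at hn
        linear_combination hn
      have hR : (-(2 * π * f_c * τ₀) : ℝ) = -(2 * π * f_c * τ j) + n * (2 * π) :=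
        Complex.ofReal_injective (mul_right_cancel₀ Complex.I_ne_zero h2)
      have h3 : 2 * π * (f_c * (τ j - τ₀)) = 2 * π * (n : ℝ) := by ring_nf; ring_nf at hR; linarith
      have h4 : (2 * π : ℝ) ≠ 0 := by positivity
      exact mul_left_cancel₀ h4 h3
    calc ‖z₀ + z j‖ < ‖z₀‖ + ‖z j‖ := norm_add_lt_of_not_sameRay hray
      _ = A₀ + A j := by rw [hnorm0, hnorm]
  have hsplit : ∑ i, z i = z j + ∑ i ∈ univ.erase j, z i :=
    (Finset.add_sum_erase _ _ (mem_univ j)).symm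
  have hsplitA : ∑ i, A i = A j + ∑ i ∈ univ.erase j, A i :=
    (Finset.add_sum_erase _ _ (mem_univ j)).symm
  calc ‖z₀ + ∑ i, z i‖ = ‖(z₀ + z j) + ∑ i ∈ univ.erase j, z i‖ := by
        rw [hsplit, ← add_assoc]
    _ ≤ ‖z₀ + z j‖ + ‖∑ i ∈ univ.erase j, z i‖ := norm_add_le _ _
    _ ≤ ‖z₀ + z j‖ + ∑ i ∈ univ.erase j, ‖z i‖ := by
        gcongr; exact norm_sum_le _ _
    _ = ‖z₀ + z j‖ + ∑ i ∈ univ.erase j, A i := by simp [hnorm]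
    _ < (A₀ + A j) + ∑ i ∈ univ.erase j, A i := by linarith
    _ = A₀ + ∑ i, A i := by rw [hsplitA]; ring
end

section
/- Let ι be a nonempty finite index set, f_c > 0, τ₀ ∈ ℝ, τ : ι → ℝ, A₀ ≥ 0 and A : ι → ℝ with A i ≥ 0. With the phase shifts φ i = 2π·Int.fract(f_c·(τ₀ − τ i)), the received phasor sum attains the maximal modulus: ‖A₀·exp(−2π·I·f_c·τ₀) + ∑_{i∈ι} A i · exp(−2π·I·f_c·τ i − I·φ i)‖ = A₀ + ∑_{i∈ι} A i; equivalently, exp(−2π·I·f_c·τ i − I·φ i) = exp(−2π·I·f_c·τ₀) for every i ∈ ι. -/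
open Real Finset

/-- the Pareto optimal phase shifts
`φ i = 2π · fract(f_c (τ₀ − τ i))` align all phasors with the direct path and
attain the maximal modulus `A₀ + ∑ i, A i`. -/
theorem pareto_phase_shifts_maximize_power
    {ι : Type*} [Fintype ι] [Nonempty ι]
    (f_c : ℝ) (hf : 0 < f_c) (τ₀ : ℝ) (τ : ι → ℝ)
    (A₀ : ℝ) (hA₀ : 0 ≤ A₀) (A : ι → ℝ) (hA : ∀ i, 0 ≤ A i) :
    ‖(A₀ : ℂ) * Complex.exp (-(2 * π * f_c * τ₀ : ℝ) * Complex.I)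
        + ∑ i, (A i : ℂ) * Complex.exp (-(2 * π * f_c * τ i : ℝ) * Complex.I
            - (2 * π * Int.fract (f_c * (τ₀ - τ i)) : ℝ) * Complex.I)‖
      = A₀ + ∑ i, A i
    ∧ ∀ i, Complex.exp (-(2 * π * f_c * τ i : ℝ) * Complex.I
            - (2 * π * Int.fract (f_c * (τ₀ - τ i)) : ℝ) * Complex.I)
          = Complex.exp (-(2 * π * f_c * τ₀ : ℝ) * Complex.I) := by
  have key : ∀ i, Complex.exp (-(2 * π * f_c * τ i : ℝ) * Complex.I
            - (2 * π * Int.fract (f_c * (τ₀ - τ i)) : ℝ) * Complex.I)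
          = Complex.exp (-(2 * π * f_c * τ₀ : ℝ) * Complex.I) := by
    intro i
    have h : (-(2 * π * f_c * τ i : ℝ) * Complex.I
            - (2 * π * Int.fract (f_c * (τ₀ - τ i)) : ℝ) * Complex.I)
        = (-(2 * π * f_c * τ₀ : ℝ)) * Complex.I
            + (⌊f_c * (τ₀ - τ i)⌋ : ℤ) * (2 * (π : ℂ) * Complex.I) := by
      rw [Int.fract]
      push_cast
      ring
    rw [h, Complex.exp_add, Complex.exp_int_mul_two_pi_mul_I, mul_one]
  refine ⟨?_, key⟩
  simp only [key]
  rw [← Finset.sum_mul, ← add_mul, norm_mul]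
  have h1 : ‖Complex.exp (-(2 * π * f_c * τ₀ : ℝ) * Complex.I)‖ = 1 := by
    simp [Complex.norm_exp]
  rw [h1, mul_one]
  have h2 : ((A₀ : ℂ) + ∑ i, (A i : ℂ)) = ((A₀ + ∑ i, A i : ℝ) : ℂ) := by push_cast; ring
  rw [h2, Complex.norm_real, Real.norm_of_nonneg (add_nonneg hA₀ (Finset.sum_nonneg fun i _ => hA i))]
end

section
/- Let ι be a nonempty finite index set, f_c > 0, τ₀ ∈ ℝ, and τ : ι → ℝ with τ i ≥ τ₀ for all i. With the phase shifts φ i = 2π·Int.fract(f_c·(τ₀ − τ i)), the effective delay of each IRS path satisfies τ i + φ i/(2π·f_c) − τ₀ = ⌈f_c·(τ i − τ₀)⌉ / f_c ≥ 0, and consequently the delay spread equals T_d = (1/f_c)·max_{i∈ι} ⌈f_c·(τ i − τ₀)⌉. -/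
open Real Finset

lemma key_eff (f_c : ℝ) (hf : 0 < f_c) (τ₀ t : ℝ) :
    t + 2 * π * Int.fract (f_c * (τ₀ - t)) / (2 * π * f_c) - τ₀
      = (⌈f_c * (t - τ₀)⌉ : ℝ) / f_c := by
  have hπ : (2 * π) ≠ 0 := by positivity
  have h1 : 2 * π * Int.fract (f_c * (τ₀ - t)) / (2 * π * f_c)
      = Int.fract (f_c * (τ₀ - t)) / f_c := by
    field_simp
  rw [h1, Int.fract]
  have hfl : (⌊f_c * (τ₀ - t)⌋ : ℝ) = -(⌈f_c * (t - τ₀)⌉ : ℝ) := by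
    rw [show f_c * (τ₀ - t) = -(f_c * (t - τ₀)) by ring, Int.floor_neg]
    push_cast; ring
  rw [hfl]
  field_simp; ring

/-- with the Pareto optimal phase shifts
`φ i = 2π · fract(f_c (τ₀ − τ i))`, each effective excess delay equals
`⌈f_c (τ i − τ₀)⌉ / f_c ≥ 0`, and the delay spread equals
`(1/f_c) · max_i ⌈f_c (τ i − τ₀)⌉`. -/
theorem pareto_phase_shifts_delay_spread
    {ι : Type*} [Fintype ι] [Nonempty ι]
    (f_c : ℝ) (hf : 0 < f_c) (τ₀ : ℝ) (τ : ι → ℝ) (hττ₀ : ∀ i, τ₀ ≤ τ i) :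
    (∀ i, τ i + 2 * π * Int.fract (f_c * (τ₀ - τ i)) / (2 * π * f_c) - τ₀
        = (⌈f_c * (τ i - τ₀)⌉ : ℝ) / f_c
      ∧ (0 : ℝ) ≤ (⌈f_c * (τ i - τ₀)⌉ : ℝ) / f_c)
    ∧ Finset.univ.sup' Finset.univ_nonempty
        (fun i => τ i + 2 * π * Int.fract (f_c * (τ₀ - τ i)) / (2 * π * f_c)) - τ₀
      = (1 / f_c) * Finset.univ.sup' Finset.univ_nonempty
          (fun i => (⌈f_c * (τ i - τ₀)⌉ : ℝ)) := by
  have hceil : ∀ i, (0 : ℝ) ≤ (⌈f_c * (τ i - τ₀)⌉ : ℝ) := by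
    intro i
    have : (0 : ℝ) ≤ f_c * (τ i - τ₀) := by
      have := hττ₀ i; nlinarith
    exact_mod_cast Int.ceil_nonneg this
  refine ⟨fun i => ⟨key_eff f_c hf τ₀ (τ i), div_nonneg (hceil i) hf.le⟩, ?_⟩
  have hfun : (fun i => τ i + 2 * π * Int.fract (f_c * (τ₀ - τ i)) / (2 * π * f_c))
      = fun i => (1 / f_c) * (⌈f_c * (τ i - τ₀)⌉ : ℝ) + τ₀ := by
    funext i
    have := key_eff f_c hf τ₀ (τ i)
    rw [one_div, inv_mul_eq_div]
    linarith
  rw [hfun]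
  have hmono : Monotone (fun x : ℝ => (1 / f_c) * x + τ₀) := by
    intro a b hab
    have : (1 / f_c) * a ≤ (1 / f_c) * b :=
      mul_le_mul_of_nonneg_left hab (by positivity)
    linarith
  rw [show (fun i => (1 / f_c) * (⌈f_c * (τ i - τ₀)⌉ : ℝ) + τ₀)
      = (fun x : ℝ => (1 / f_c) * x + τ₀) ∘ (fun i => (⌈f_c * (τ i - τ₀)⌉ : ℝ)) from rfl,
    ← Finset.comp_sup'_eq_sup'_comp _ _ (fun x y => hmono.map_sup x y)]
  ring
end

section
/- Let ι be a nonempty finite index set, f_c > 0, and let τ₀ : ℝ → ℝ and τ i : ℝ → ℝ (i ∈ ι) be functions differentiable at a time t. Define φ i (s) = 2π·Int.fract(f_c·(τ₀(s) − τ i (s))). If f_c·(τ₀(t) − τ i (t)) ∉ ℤ, then the effective delay s ↦ τ i (s) + φ i (s)/(2π·f_c) is differentiable at t with derivative (τ₀)'(t); hence at such times the Doppler spread between the direct path and every IRS path, as well as across the IRS, is zero. -/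
open Real

theorem aux_key (f_c : ℝ) (hf : 0 < f_c)
    (τ₀ : ℝ → ℝ) (τi : ℝ → ℝ) (t : ℝ)
    (hτ₀ : DifferentiableAt ℝ τ₀ t) (hτ : DifferentiableAt ℝ τi t)
    (hnint : ¬ ∃ k : ℤ, f_c * (τ₀ t - τi t) = (k : ℝ)) :
    HasDerivAt
      (fun s => τi s + 2 * π * Int.fract (f_c * (τ₀ s - τi s)) / (2 * π * f_c))
      (deriv τ₀ t) t := by
  set g : ℝ → ℝ := fun s => f_c * (τ₀ s - τi s) with hgdef
  have hgd : HasDerivAt g (f_c * (deriv τ₀ t - deriv (τi) t)) t :=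
    ((hτ₀.hasDerivAt.sub hτ.hasDerivAt)).const_mul f_c
  set k : ℤ := ⌊g t⌋ with hk
  have hlt : (k : ℝ) < g t := by
    refine lt_of_le_of_ne (Int.floor_le _) fun h => hnint ⟨k, h.symm⟩
  have hlt2 : g t < k + 1 := Int.lt_floor_add_one _
  have hev : (fun s => τi s + 2 * π * Int.fract (g s) / (2 * π * f_c)) =ᶠ[nhds t]
      (fun s => τi s + 2 * π * (g s - k) / (2 * π * f_c)) := by
    have hmem : ∀ᶠ s in nhds t, g s ∈ Set.Ioo (k : ℝ) (k + 1) :=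
      hgd.continuousAt.eventually_mem (isOpen_Ioo.mem_nhds ⟨hlt, hlt2⟩)
    filter_upwards [hmem] with s hs
    have hfl : ⌊g s⌋ = k := by
      rw [Int.floor_eq_iff]
      exact ⟨le_of_lt hs.1, by exact_mod_cast hs.2⟩
    rw [Int.fract, hfl]
  have H : HasDerivAt (fun s => τi s + 2 * π * (g s - k) / (2 * π * f_c))
      (deriv τ₀ t) t := by
    have h2 : HasDerivAt (fun s => 2 * π * (g s - (k : ℝ)) / (2 * π * f_c))
        (2 * π * (f_c * (deriv τ₀ t - deriv τi t)) / (2 * π * f_c)) t :=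
      (((hgd.sub_const (k : ℝ)).const_mul (2 * π))).div_const _
    have h3 := hτ.hasDerivAt.add h2
    refine h3.congr_deriv ?_
    have hπ : (2 : ℝ) * π ≠ 0 := by positivity
    rw [mul_div_mul_left _ _ hπ, mul_div_cancel_left₀ _ (ne_of_gt hf)]
    ring
  exact H.congr_of_eventuallyEq hev

/-- with the Pareto optimal phase shifts
`φ i (s) = 2π · fract(f_c (τ₀ s − τ i s))`, at every time `t` where all
`f_c (τ₀ t − τ i t)` are non-integer, each effective delay is differentiable
with derivative `(τ₀)'(t)`, and both Doppler spreads vanish. -/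
theorem pareto_phase_shifts_zero_doppler
    {ι : Type*} [Fintype ι] [Nonempty ι]
    (f_c : ℝ) (hf : 0 < f_c)
    (τ₀ : ℝ → ℝ) (τ : ι → ℝ → ℝ) (t : ℝ)
    (hτ₀ : DifferentiableAt ℝ τ₀ t) (hτ : ∀ i, DifferentiableAt ℝ (τ i) t)
    (hnint : ∀ i, ¬ ∃ k : ℤ, f_c * (τ₀ t - τ i t) = (k : ℝ)) :
    (∀ i,
      DifferentiableAt ℝ
        (fun s => τ i s + 2 * π * Int.fract (f_c * (τ₀ s - τ i s)) / (2 * π * f_c)) t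
      ∧ deriv
          (fun s => τ i s + 2 * π * Int.fract (f_c * (τ₀ s - τ i s)) / (2 * π * f_c)) t
        = deriv τ₀ t)
    ∧ ∀ i j,
        f_c * |deriv
            (fun s => τ i s + 2 * π * Int.fract (f_c * (τ₀ s - τ i s)) / (2 * π * f_c)) t
          - deriv τ₀ t| = 0
        ∧ f_c * |deriv
            (fun s => τ i s + 2 * π * Int.fract (f_c * (τ₀ s - τ i s)) / (2 * π * f_c)) t
          - deriv
            (fun s => τ j s + 2 * π * Int.fract (f_c * (τ₀ s - τ j s)) / (2 * π * f_c)) t|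
          = 0 := by
  have key := fun i => aux_key f_c hf τ₀ (τ i) t hτ₀ (hτ i) (hnint i)
  refine ⟨fun i => ⟨(key i).differentiableAt, (key i).deriv⟩, fun i j => ?_⟩
  rw [(key i).deriv, (key j).deriv, sub_self, abs_zero, mul_zero]
  exact ⟨rfl, rfl⟩
end
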